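/- The sequence of digits a_n = χ ∘ τ^{n-1} of the doubling map (χ(x) = ⌊1/x⌋) is α-mixing; more precisely, for all n, k ∈ ℕ and all sets A, B of natural numbers, |λ({a_k ∈ B} ∩ {a_{n+k} ∈ A}) - λ(a_k ∈ B)·λ(a_{n+k} ∈ A)| ≤ 2^{-n/2+2}. -/
import Mathlib


open MeasureTheory Set

/-- The doubling map `τ(x) = 2x mod 1`. -/
noncomputable def tau (x : ℝ) : ℝ := Int.fract (2 * x)

/-- The digit sequence `a_n = χ ∘ τ^{n-1}` with `χ(x) = ⌊1/x⌋` (ℕ-valued). -/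
noncomputable def digit (n : ℕ) (x : ℝ) : ℕ := ⌊1 / tau^[n - 1] x⌋₊

open scoped ENNReal NNReal

lemma fract_int_mul_fract (m : ℤ) (y : ℝ) :
    Int.fract ((m:ℝ) * Int.fract y) = Int.fract ((m:ℝ) * y) := by
  have h : (m:ℝ) * Int.fract y = m*y - ((m*⌊y⌋ : ℤ) : ℝ) := by
    rw [Int.fract]; push_cast; ring
  rw [h, Int.fract_sub_intCast]

lemma tau_iterate (p : ℕ) {x : ℝ} (hx : x ∈ Ico (0:ℝ) 1) :
    tau^[p] x = Int.fract ((2:ℝ)^p * x) := by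
  induction p with
  | zero => simpa using (Int.fract_eq_self.2 ⟨hx.1, hx.2⟩).symm
  | succ p ih =>
    rw [Function.iterate_succ_apply', ih, tau]
    have h := fract_int_mul_fract 2 ((2:ℝ)^p * x)
    push_cast at h
    rw [h]
    ring_nf

lemma meas_fractset (c : ℝ) (S : Set ℝ) (hS : MeasurableSet S) :
    MeasurableSet {x : ℝ | Int.fract (c * x) ∈ S} :=
  (measurable_fract.comp (measurable_id.const_mul c)) hS

lemma prim (p i : ℕ) (S : Set ℝ) (hS : MeasurableSet S) (hS1 : S ⊆ Ico 0 1) :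
    volume (Ico ((i:ℝ)/2^p) (((i+1:ℕ):ℝ)/2^p) ∩ {x : ℝ | Int.fract ((2:ℝ)^p * x) ∈ S})
      = volume S / 2^p := by
  have hp : (0:ℝ) < 2^p := by positivity
  have key : ∀ x : ℝ, (2:ℝ)^p * x - i ∈ Ico (0:ℝ) 1 →
      Int.fract ((2:ℝ)^p * x) = (2:ℝ)^p * x - i := by
    intro x hmem
    have h := Int.fract_sub_intCast ((2:ℝ)^p*x) (i:ℤ)
    push_cast at h
    rw [← h]
    exact Int.fract_eq_self.2 ⟨hmem.1, hmem.2⟩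
  have hset : Ico ((i:ℝ)/2^p) (((i+1:ℕ):ℝ)/2^p) ∩ {x : ℝ | Int.fract ((2:ℝ)^p * x) ∈ S}
      = (fun x : ℝ => (2:ℝ)^p * x - i) ⁻¹' S := by
    ext x
    simp only [mem_inter_iff, mem_Ico, mem_setOf_eq, mem_preimage]
    constructor
    · rintro ⟨⟨h1, h2⟩, hf⟩
      have e1 := (div_le_iff₀ hp).1 h1
      have e2 := (lt_div_iff₀ hp).1 h2
      push_cast at e1 e2
      have hmem : (2:ℝ)^p * x - i ∈ Ico (0:ℝ) 1 :=
        ⟨by nlinarith [mul_comm x ((2:ℝ)^p)], by nlinarith [mul_comm x ((2:ℝ)^p)]⟩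
      rwa [key x hmem] at hf
    · intro hx
      have hmem : (2:ℝ)^p * x - i ∈ Ico (0:ℝ) 1 := hS1 hx
      obtain ⟨m1, m2⟩ := hmem
      refine ⟨⟨?_, ?_⟩, by rwa [key x ⟨m1, m2⟩]⟩
      · rw [div_le_iff₀ hp]; nlinarith [mul_comm x ((2:ℝ)^p)]
      · rw [lt_div_iff₀ hp]; push_cast; nlinarith [mul_comm x ((2:ℝ)^p)]
  rw [hset]
  have heq : (fun x : ℝ => (2:ℝ)^p * x - i) ⁻¹' S = ((2:ℝ)^p * ·) ⁻¹' ((· + (-(i:ℝ))) ⁻¹' S) := by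
    ext x; simp [sub_eq_add_neg]
  rw [heq, Real.volume_preimage_mul_left (ne_of_gt hp), measure_preimage_add_right]
  rw [abs_of_pos (inv_pos.2 hp), ENNReal.ofReal_inv_of_pos hp, ENNReal.div_eq_inv_mul]
  congr 1
  rw [ENNReal.ofReal_pow (by norm_num)]
  norm_num

lemma two_pow_enn (p : ℕ) : ENNReal.ofReal ((2:ℝ)^p) = (2:ℝ≥0∞)^p := by
  rw [ENNReal.ofReal_pow (by norm_num)]; norm_num

lemma vol_dyadic (p a b : ℕ) :
    volume (Ico ((a:ℝ)/2^p) ((b:ℝ)/2^p)) = ((b - a : ℕ) : ℝ≥0∞) / 2^p := by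
  have hp : (0:ℝ) < 2^p := by positivity
  rw [Real.volume_Ico]
  rcases le_total a b with h | h
  · rw [div_sub_div_same, ← Nat.cast_sub h, ENNReal.ofReal_div_of_pos hp,
      ENNReal.ofReal_natCast, two_pow_enn]
  · have h0 : b - a = 0 := Nat.sub_eq_zero_of_le h
    have h2 : (b:ℝ)/2^p - (a:ℝ)/2^p ≤ 0 := by
      rw [sub_nonpos]
      have : (b:ℝ) ≤ (a:ℝ) := by exact_mod_cast h
      gcongr
    rw [h0, ENNReal.ofReal_eq_zero.2 h2]
    simp

lemma ind (p : ℕ) (S : Set ℝ) (hS : MeasurableSet S) (hS1 : S ⊆ Ico 0 1) (a d : ℕ) :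
    volume (Ico ((a:ℝ)/2^p) (((a+d:ℕ):ℝ)/2^p) ∩ {x : ℝ | Int.fract ((2:ℝ)^p * x) ∈ S})
      = (d : ℝ≥0∞) / 2^p * volume S := by
  induction d with
  | zero => simp
  | succ d ih =>
    have hp : (0:ℝ) < 2^p := by positivity
    have hle : ∀ u v : ℕ, u ≤ v → ((u:ℝ)/2^p ≤ (v:ℝ)/2^p) := by
      intro u v huv
      exact (div_le_div_iff_of_pos_right hp).2 (by exact_mod_cast huv)
    have hsplit : Ico ((a:ℝ)/2^p) (((a+(d+1):ℕ):ℝ)/2^p)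
        = Ico ((a:ℝ)/2^p) (((a+d:ℕ):ℝ)/2^p) ∪ Ico (((a+d:ℕ):ℝ)/2^p) (((a+d+1:ℕ):ℝ)/2^p) := by
      rw [Ico_union_Ico_eq_Ico (hle a (a+d) (Nat.le_add_right a d))
        (hle (a+d) (a+d+1) (Nat.le_succ _))]
      norm_cast
    rw [hsplit, union_inter_distrib_right, measure_union, ih, prim p (a+d) S hS hS1]
    · push_cast
      simp only [div_eq_mul_inv]
      ring
    · exact Disjoint.mono inter_subset_left inter_subset_left (Set.Ico_disjoint_Ico_same)
    · exact (measurableSet_Ico).inter (meas_fractset _ S hS)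

lemma full (p : ℕ) (S : Set ℝ) (hS : MeasurableSet S) (hS1 : S ⊆ Ico 0 1) :
    volume (Ico (0:ℝ) 1 ∩ {x : ℝ | Int.fract ((2:ℝ)^p * x) ∈ S}) = volume S := by
  have h := ind p S hS hS1 0 (2^p)
  have h1 : ((0:ℕ):ℝ)/2^p = 0 := by norm_num
  have h2 : (((0+2^p:ℕ)):ℝ)/2^p = 1 := by
    push_cast; rw [zero_add, div_self (by positivity)]
  rw [h1, h2] at h
  rw [h]
  push_cast
  rw [ENNReal.div_self (by positivity) (by simp), one_mul]

def dSet (A : Set ℕ) : Set ℝ := {y : ℝ | y ∈ Ico (0:ℝ) 1 ∧ ⌊1/y⌋₊ ∈ A}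

lemma dSet_sub (A : Set ℕ) : dSet A ⊆ Ico (0:ℝ) 1 := fun _ hy => hy.1

lemma dSet_meas (A : Set ℕ) : MeasurableSet (dSet A) := by
  have h : dSet A = Ico (0:ℝ) 1 ∩ (fun y : ℝ => ⌊1/y⌋₊) ⁻¹' A := rfl
  rw [h]
  refine measurableSet_Ico.inter ?_
  have hm : Measurable fun y : ℝ => ⌊1/y⌋₊ := by
    apply Nat.measurable_floor.comp
    fun_prop
  exact hm (by trivial)

lemma floor_eq_on_Ioc {m : ℕ} (hm : 1 ≤ m) {y : ℝ}
    (hy : y ∈ Ioc (1/((m:ℝ)+1)) (1/(m:ℝ))) : ⌊1/y⌋₊ = m := by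
  have hm0 : (0:ℝ) < m := by exact_mod_cast hm
  have hy0 : 0 < y := lt_trans (by positivity) hy.1
  rw [Nat.floor_eq_iff (by positivity)]
  constructor
  · rw [le_div_iff₀ hy0]
    have := (le_div_iff₀ hm0).1 hy.2
    nlinarith [mul_comm y (m:ℝ)]
  · rw [div_lt_iff₀ hy0]
    have := (div_lt_iff₀ (by positivity : (0:ℝ) < (m:ℝ)+1)).1 hy.1
    nlinarith [mul_comm y ((m:ℝ)+1)]

def lef (n m : ℕ) : ℕ := 2^n/(m+1) + 1
def rig (n m : ℕ) : ℕ := 2^n/m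
noncomputable def Jset (n m : ℕ) : Set ℝ := Ico ((lef n m : ℝ)/2^n) ((rig n m : ℝ)/2^n)

lemma div_lt_succ_div (c m : ℕ) (hm : 1 ≤ m) : (c:ℝ)/(m:ℝ) < ((c/m : ℕ) : ℝ) + 1 := by
  have h1 := Nat.div_add_mod c m
  have h2 : c % m < m := Nat.mod_lt c hm
  have h3 : c < (c/m + 1) * m := by
    have h0 : m * (c / m) + c % m = c := Nat.div_add_mod c m
    nlinarith [h0]
  have hm0 : (0:ℝ) < m := by exact_mod_cast hm
  rw [div_lt_iff₀ hm0]
  have h4 : (c:ℝ) < (((c/m : ℕ):ℝ) + 1) * m := by exact_mod_cast h3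
  linarith

lemma J_sub_Ioc (n m : ℕ) (hm : 1 ≤ m) :
    Jset n m ⊆ Ioc (1/((m:ℝ)+1)) (1/(m:ℝ)) := by
  intro y hy
  obtain ⟨h1, h2⟩ := hy
  have h2n : (0:ℝ) < 2^n := by positivity
  have hm0 : (0:ℝ) < m := by exact_mod_cast hm
  constructor
  · have hlt : (2:ℝ)^n/((m:ℝ)+1) < lef n m := by
      have := div_lt_succ_div (2^n) (m+1) (by omega)
      push_cast at this ⊢
      rw [lef]; push_cast; linarith
    have : (2:ℝ)^n/((m:ℝ)+1)/2^n < (lef n m : ℝ)/2^n := by gcongr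
    calc 1/((m:ℝ)+1) = (2:ℝ)^n/((m:ℝ)+1)/2^n := by field_simp
    _ < (lef n m : ℝ)/2^n := this
    _ ≤ y := h1
  · have hle : (rig n m : ℝ) ≤ (2:ℝ)^n/(m:ℝ) := by
      have := Nat.cast_div_le (α := ℝ) (m := 2^n) (n := m)
      rw [rig]; push_cast at this ⊢; exact this
    have : (rig n m : ℝ)/2^n ≤ (2:ℝ)^n/(m:ℝ)/2^n := by gcongr
    calc y ≤ (rig n m : ℝ)/2^n := le_of_lt h2
    _ ≤ (2:ℝ)^n/(m:ℝ)/2^n := this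
    _ = 1/(m:ℝ) := by field_simp <;> ring

lemma J_sub_Ico01 (n m : ℕ) (hm : 1 ≤ m) : Jset n m ⊆ Ico (0:ℝ) 1 := by
  intro y hy
  have h2n : (0:ℝ) < 2^n := by positivity
  constructor
  · exact le_trans (by positivity) hy.1
  · have h1 : (rig n m : ℝ) ≤ 2^n := by
      have : rig n m ≤ 2^n := Nat.div_le_self _ _
      exact_mod_cast this
    have := hy.2
    have h2 : (rig n m : ℝ)/2^n ≤ 1 := by rw [div_le_one h2n]; exact h1
    linarith

lemma J_inter_vol (n m : ℕ) (A : Set ℕ) :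
    volume (Jset n m ∩ {y : ℝ | Int.fract ((2:ℝ)^n*y) ∈ dSet A})
      = volume (Jset n m) * volume (dSet A) := by
  by_cases hlr : lef n m ≤ rig n m
  · have h := ind n (dSet A) (dSet_meas A) (dSet_sub A) (lef n m) (rig n m - lef n m)
    rw [Nat.add_sub_cancel' hlr] at h
    rw [Jset, h, vol_dyadic n (lef n m) (rig n m), rig, lef]
  · have hemp : Jset n m = ∅ := by
      rw [Jset, Ico_eq_empty]
      intro hcon
      have : (lef n m : ℝ) < rig n m := by
        have h2n : (0:ℝ) < 2^n := by positivity
        exact (div_lt_div_iff_of_pos_right h2n).1 hcon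
      exact hlr (by exact_mod_cast this.le)
    simp [hemp]

lemma Ioc_diff_J_vol (n m : ℕ) (hm : 1 ≤ m) :
    volume (Ioc (1/((m:ℝ)+1)) (1/(m:ℝ)) \ Jset n m) ≤ ENNReal.ofReal (2/2^n) := by
  have h2n : (0:ℝ) < 2^n := by positivity
  have hm0 : (0:ℝ) < m := by exact_mod_cast hm
  have hsub : Ioc (1/((m:ℝ)+1)) (1/(m:ℝ)) \ Jset n m
      ⊆ Ioc (1/((m:ℝ)+1)) ((lef n m : ℝ)/2^n) ∪ Icc ((rig n m : ℝ)/2^n) (1/(m:ℝ)) := by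
    rintro y ⟨⟨hy1, hy2⟩, hyJ⟩
    rw [Jset, mem_Ico, not_and_or, not_le, not_lt] at hyJ
    rcases hyJ with h | h
    · exact Or.inl ⟨hy1, h.le⟩
    · exact Or.inr ⟨h, hy2⟩
  refine le_trans (measure_mono hsub) (le_trans (measure_union_le _ _) ?_)
  rw [Real.volume_Ioc, Real.volume_Icc]
  have b1 : (lef n m : ℝ)/2^n - 1/((m:ℝ)+1) ≤ 1/2^n := by
    have hle : (lef n m : ℝ) ≤ (2:ℝ)^n/((m:ℝ)+1) + 1 := by
      have := Nat.cast_div_le (α := ℝ) (m := 2^n) (n := m+1)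
      rw [lef]; push_cast at this ⊢; linarith
    have h1 : (lef n m : ℝ)/2^n ≤ ((2:ℝ)^n/((m:ℝ)+1) + 1)/2^n := by gcongr
    have h2 : ((2:ℝ)^n/((m:ℝ)+1) + 1)/2^n = 1/((m:ℝ)+1) + 1/2^n := by field_simp
    linarith
  have b2 : 1/(m:ℝ) - (rig n m : ℝ)/2^n ≤ 1/2^n := by
    have hlt := div_lt_succ_div (2^n) m hm
    push_cast at hlt
    have h1 : (2:ℝ)^n/(m:ℝ)/2^n < ((rig n m : ℝ) + 1)/2^n := by rw [rig]; push_cast at hlt ⊢; gcongr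
    have h2 : (2:ℝ)^n/(m:ℝ)/2^n = 1/(m:ℝ) := by field_simp <;> ring
    have h3 : ((rig n m : ℝ) + 1)/2^n = (rig n m : ℝ)/2^n + 1/2^n := by ring
    linarith
  calc ENNReal.ofReal ((lef n m : ℝ)/2^n - 1/((m:ℝ)+1)) + ENNReal.ofReal (1/(m:ℝ) - (rig n m : ℝ)/2^n)
      ≤ ENNReal.ofReal (1/2^n) + ENNReal.ofReal (1/2^n) := by
        exact add_le_add (ENNReal.ofReal_le_ofReal b1) (ENNReal.ofReal_le_ofReal b2)
  _ = ENNReal.ofReal (2/2^n) := by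
        rw [← ENNReal.ofReal_add (by positivity) (by positivity)]
        congr 1; ring

lemma vol_ne_top {u : Set ℝ} (hu : u ⊆ Ico (0:ℝ) 1) : volume u ≠ ⊤ := by
  refine ne_top_of_le_ne_top ?_ (measure_mono hu)
  rw [Real.volume_Ico]
  simp

lemma vol_toReal_le_one {u : Set ℝ} (hu : u ⊆ Ico (0:ℝ) 1) : (volume u).toReal ≤ 1 := by
  have h : volume u ≤ volume (Ico (0:ℝ) 1) := measure_mono hu
  rw [Real.volume_Ico] at h
  norm_num at h
  calc (volume u).toReal ≤ (1:ℝ≥0∞).toReal := ENNReal.toReal_mono (by simp) h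
  _ = 1 := by simp

lemma core (n : ℕ) (hn : 1 ≤ n) (A B : Set ℕ) :
    |(volume (dSet B ∩ {y : ℝ | Int.fract ((2:ℝ)^n * y) ∈ dSet A})).toReal
      - (volume (dSet B)).toReal * (volume (dSet A)).toReal|
      ≤ (1:ℝ)/2^((n+1)/2 : ℕ) + 2^((n+1)/2 : ℕ) * (2/2^n) := by
  classical
  set j := (n+1)/2 with hj
  set M := 2^j with hM
  set s : Set ℝ := {y : ℝ | Int.fract ((2:ℝ)^n * y) ∈ dSet A} with hs
  have hsmeas : MeasurableSet s := meas_fractset _ _ (dSet_meas A)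
  set T : Finset ℕ := (Finset.Ico 1 M).filter (· ∈ B) with hT
  set D : Set ℝ := ⋃ m ∈ T, Jset n m with hD
  have hmemT : ∀ m ∈ T, 1 ≤ m ∧ m < M ∧ m ∈ B := by
    intro m hm
    rw [hT, Finset.mem_filter, Finset.mem_Ico] at hm
    exact ⟨hm.1.1, hm.1.2, hm.2⟩
  have hDmeas : MeasurableSet D := by
    refine MeasurableSet.biUnion T.countable_toSet (fun m _ => measurableSet_Ico)
  have hDsub : D ⊆ dSet B := by
    rintro y hy
    rw [hD, mem_iUnion₂] at hy
    obtain ⟨m, hmT, hym⟩ := hy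
    obtain ⟨hm1, _, hmB⟩ := hmemT m hmT
    refine ⟨J_sub_Ico01 n m hm1 hym, ?_⟩
    rw [floor_eq_on_Ioc hm1 (J_sub_Ioc n m hm1 hym)]
    exact hmB
  have hdisj : (T : Set ℕ).PairwiseDisjoint (Jset n) := by
    intro m hm m' hm' hne
    obtain ⟨hm1, _, _⟩ := hmemT m hm
    obtain ⟨hm'1, _, _⟩ := hmemT m' hm'
    refine Set.disjoint_of_subset (J_sub_Ioc n m hm1) (J_sub_Ioc n m' hm'1) ?_
    rw [Set.Ioc_disjoint_Ioc]
    rcases lt_or_gt_of_ne hne with h | h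
    · have : 1/(m':ℝ) ≤ 1/((m:ℝ)+1) := by
        apply one_div_le_one_div_of_le (by positivity)
        exact_mod_cast h
      calc min (1/(m:ℝ)) (1/(m':ℝ)) ≤ 1/(m':ℝ) := min_le_right _ _
      _ ≤ 1/((m:ℝ)+1) := this
      _ ≤ max (1/((m:ℝ)+1)) (1/((m':ℝ)+1)) := le_max_left _ _
    · have : 1/(m:ℝ) ≤ 1/((m':ℝ)+1) := by
        apply one_div_le_one_div_of_le (by positivity)
        exact_mod_cast h
      calc min (1/(m:ℝ)) (1/(m':ℝ)) ≤ 1/(m:ℝ) := min_le_left _ _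
      _ ≤ 1/((m':ℝ)+1) := this
      _ ≤ max (1/((m:ℝ)+1)) (1/((m':ℝ)+1)) := le_max_right _ _
  -- volume of D and D ∩ s
  have hDvol : volume D = ∑ m ∈ T, volume (Jset n m) := by
    rw [hD]
    exact measure_biUnion_finset hdisj (fun m _ => measurableSet_Ico)
  have hDs : volume (D ∩ s) = volume D * volume (dSet A) := by
    have h1 : D ∩ s = ⋃ m ∈ T, (Jset n m ∩ s) := by
      rw [hD, Set.iUnion₂_inter]

    rw [h1, measure_biUnion_finset
      (fun m hm m' hm' hne => Disjoint.mono inter_subset_left inter_subset_left (hdisj hm hm' hne))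
      (fun m _ => measurableSet_Ico.inter hsmeas)]
    rw [hDvol, Finset.sum_mul]
    exact Finset.sum_congr rfl (fun m _ => J_inter_vol n m A)
  -- the bad set
  have hbad : volume (dSet B \ D) ≤ ENNReal.ofReal (1/M) + M * ENNReal.ofReal (2/2^n) := by
    have hM0 : (0:ℝ) < M := by positivity
    have hsub : dSet B \ D ⊆ Icc (0:ℝ) (1/M) ∪ ⋃ m ∈ T, (Ioc (1/((m:ℝ)+1)) (1/(m:ℝ)) \ Jset n m) := by
      rintro y ⟨⟨hy01, hyB⟩, hyD⟩
      by_cases hyM : y ≤ 1/M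
      · exact Or.inl ⟨hy01.1, hyM⟩
      · push_neg at hyM
        have hy0 : 0 < y := lt_trans (by positivity) hyM
        set m := ⌊1/y⌋₊ with hmdef
        have hy1 : (1:ℝ) ≤ 1/y := by
          rw [le_div_iff₀ hy0]; linarith [hy01.2]
        have hm1 : 1 ≤ m := Nat.le_floor (by exact_mod_cast hy1)
        have hfl := Nat.floor_le (by positivity : (0:ℝ) ≤ 1/y)
        have hfu := Nat.lt_floor_add_one (1/y)
        have hmM : m < M := by
          have h1 : 1/y < (M:ℝ) := by
            rw [div_lt_iff₀ hy0]
            have := (div_lt_iff₀ hM0).1 hyM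
            nlinarith [mul_comm y (M:ℝ)]
          have : (m:ℝ) < M := lt_of_le_of_lt hfl h1
          exact_mod_cast this
        have hmT : m ∈ T := by
          rw [hT, Finset.mem_filter, Finset.mem_Ico]
          exact ⟨⟨hm1, hmM⟩, hyB⟩
        have hyIoc : y ∈ Ioc (1/((m:ℝ)+1)) (1/(m:ℝ)) := by
          have hm0 : (0:ℝ) < m := by exact_mod_cast hm1
          constructor
          · rw [div_lt_iff₀ (by positivity : (0:ℝ) < (m:ℝ)+1)]
            have := (div_lt_iff₀ hy0).1 hfu
            nlinarith [mul_comm y ((m:ℝ)+1)]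
          · rw [le_div_iff₀ hm0]
            have := (le_div_iff₀ hy0).1 hfl
            nlinarith [mul_comm y (m:ℝ)]
        have hyJ : y ∉ Jset n m := by
          intro hcon
          exact hyD (mem_iUnion₂.2 ⟨m, hmT, hcon⟩)
        exact Or.inr (mem_iUnion₂.2 ⟨m, hmT, ⟨hyIoc, hyJ⟩⟩)
    refine le_trans (measure_mono hsub) (le_trans (measure_union_le _ _) ?_)
    have hIcc : volume (Icc (0:ℝ) (1/M)) = ENNReal.ofReal (1/M) := by
      rw [Real.volume_Icc]; norm_num
    have hUb : volume (⋃ m ∈ T, (Ioc (1/((m:ℝ)+1)) (1/(m:ℝ)) \ Jset n m))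
        ≤ M * ENNReal.ofReal (2/2^n) := by
      refine le_trans (measure_biUnion_finset_le T _) ?_
      have hcard : T.card ≤ M := by
        calc T.card ≤ (Finset.Ico 1 M).card := Finset.card_filter_le _ _
        _ = M - 1 := by rw [Nat.card_Ico]
        _ ≤ M := Nat.sub_le _ _
      calc ∑ m ∈ T, volume (Ioc (1/((m:ℝ)+1)) (1/(m:ℝ)) \ Jset n m)
          ≤ ∑ m ∈ T, ENNReal.ofReal (2/2^n) := by
            refine Finset.sum_le_sum (fun m hm => Ioc_diff_J_vol n m (hmemT m hm).1)
      _ = (T.card : ℝ≥0∞) * ENNReal.ofReal (2/2^n) := by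
            rw [Finset.sum_const, nsmul_eq_mul]
      _ ≤ (M : ℝ≥0∞) * ENNReal.ofReal (2/2^n) :=
            mul_le_mul_left (by exact_mod_cast hcard) _
    rw [hIcc]
    exact add_le_add le_rfl hUb
  -- pass to reals
  have hsubB : dSet B \ D ⊆ Ico (0:ℝ) 1 := (diff_subset).trans (dSet_sub B)
  have hBs_sub : dSet B ∩ s ⊆ Ico (0:ℝ) 1 := inter_subset_left.trans (dSet_sub B)
  have hfinB := vol_ne_top (dSet_sub B)
  have hfinA := vol_ne_top (dSet_sub A)
  have hfinD := vol_ne_top (hDsub.trans (dSet_sub B))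
  have hfinR := vol_ne_top hsubB
  have hfinBs := vol_ne_top hBs_sub
  have hfinDs : volume (D ∩ s) ≠ ⊤ := vol_ne_top (fun y hy => dSet_sub B (hDsub hy.1))
  have hfinRs : volume ((dSet B \ D) ∩ s) ≠ ⊤ := vol_ne_top (fun y hy => dSet_sub B hy.1.1)
  have eB : volume (dSet B) = volume D + volume (dSet B \ D) := by
    rw [← measure_union (disjoint_sdiff_right) ((dSet_meas B).diff hDmeas),
      union_diff_cancel hDsub]
  have eBs : volume (dSet B ∩ s) = volume (D ∩ s) + volume ((dSet B \ D) ∩ s) := by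
    have h1 : dSet B ∩ s = (D ∩ s) ∪ ((dSet B \ D) ∩ s) := by
      rw [← union_inter_distrib_right, union_diff_cancel hDsub]
    rw [h1, measure_union (Disjoint.mono inter_subset_left inter_subset_left disjoint_sdiff_right)
      (((dSet_meas B).diff hDmeas).inter hsmeas)]
  set a : ℝ := (volume (dSet A)).toReal with ha
  set rR : ℝ := (volume (dSet B \ D)).toReal with hrR
  set rI : ℝ := (volume ((dSet B \ D) ∩ s)).toReal with hrI
  set dD : ℝ := (volume D).toReal with hdD
  have ha0 : 0 ≤ a := ENNReal.toReal_nonneg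
  have ha1 : a ≤ 1 := vol_toReal_le_one (dSet_sub A)
  have hrR0 : 0 ≤ rR := ENNReal.toReal_nonneg
  have hrI0 : 0 ≤ rI := ENNReal.toReal_nonneg
  have hrIR : rI ≤ rR := by
    rw [hrI, hrR]
    exact ENNReal.toReal_mono hfinR (measure_mono inter_subset_left)
  have etB : (volume (dSet B)).toReal = dD + rR := by
    rw [eB, ENNReal.toReal_add hfinD hfinR]
  have etBs : (volume (dSet B ∩ s)).toReal = dD * a + rI := by
    rw [eBs, ENNReal.toReal_add hfinDs hfinRs, hDs, ENNReal.toReal_mul]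
  have hrRe : rR ≤ (1:ℝ)/M + M * (2/2^n) := by
    rw [hrR]
    have h1 : volume (dSet B \ D) ≤ ENNReal.ofReal ((1:ℝ)/M + M * (2/2^n)) := by
      refine le_trans hbad ?_
      rw [ENNReal.ofReal_add (by positivity) (by positivity)]
      refine add_le_add le_rfl ?_
      rw [ENNReal.ofReal_mul (by positivity)]
      gcongr
      rw [ENNReal.ofReal_natCast]
    exact ENNReal.toReal_le_of_le_ofReal (by positivity) h1
  have hMr : ((M:ℕ):ℝ) = 2^j := by rw [hM]; push_cast; ring
  rw [hMr] at hrRe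
  rw [etB, etBs]
  have habs : |dD * a + rI - (dD + rR) * a| = |rI - rR * a| := by ring_nf
  rw [habs, abs_le]
  constructor
  · nlinarith [mul_nonneg hrR0 ha0, mul_le_of_le_one_right hrR0 ha1]
  · nlinarith [mul_nonneg hrR0 ha0, mul_le_of_le_one_right hrR0 ha1]

lemma eps_bound (n : ℕ) :
    (1:ℝ)/2^((n+1)/2 : ℕ) + 2^((n+1)/2 : ℕ) * (2/2^n) ≤ (2:ℝ) ^ (-(n:ℝ)/2 + 2) := by
  set j : ℕ := (n+1)/2 with hj
  have h2 : (0:ℝ) < 2 := two_pos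
  have hj1 : (n:ℝ) ≤ 2*j := by exact_mod_cast (by omega : n ≤ 2*((n+1)/2))
  have hj2 : (2:ℝ)*j ≤ n+1 := by exact_mod_cast (by omega : 2*((n+1)/2) ≤ n+1)
  have hL1 : (2:ℝ)^(-(j:ℝ)) = 1/2^(j:ℕ) := by
    rw [Real.rpow_neg (by norm_num : (0:ℝ) ≤ 2), Real.rpow_natCast, one_div]
  have hL2 : (2:ℝ)^((j:ℝ)+1-n) = 2^(j:ℕ) * (2/2^(n:ℕ)) := by
    rw [Real.rpow_sub h2, Real.rpow_add h2, Real.rpow_one, Real.rpow_natCast, Real.rpow_natCast]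
    ring
  have hR : (2:ℝ)^(-(n:ℝ)/2+2) = 4 * 2^(-(n:ℝ)/2) := by
    rw [Real.rpow_add h2]
    have e : (2:ℝ)^(2:ℝ) = 4 := by
      rw [show (2:ℝ) = ((2:ℕ):ℝ) from by norm_num]
      rw [Real.rpow_natCast]; norm_num
    rw [e]; ring
  have key32 : (2:ℝ)^((3:ℝ)/2) ≤ 3 := by
    have e : ((2:ℝ)^((3:ℝ)/2))^(2:ℕ) = 8 := by
      rw [← Real.rpow_natCast ((2:ℝ)^((3:ℝ)/2)) 2, ← Real.rpow_mul (le_of_lt h2)]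
      rw [show ((3:ℝ)/2 * (2:ℕ)) = ((3:ℕ):ℝ) from by push_cast; ring]
      rw [Real.rpow_natCast]; norm_num
    nlinarith [Real.rpow_pos_of_pos h2 ((3:ℝ)/2)]
  have m1 : (2:ℝ)^(-(j:ℝ)) ≤ 2^(-(n:ℝ)/2) :=
    Real.rpow_le_rpow_of_exponent_le one_le_two (by linarith)
  have m2 : (2:ℝ)^((j:ℝ)+1-n) ≤ 2^((3-(n:ℝ))/2) :=
    Real.rpow_le_rpow_of_exponent_le one_le_two (by linarith)
  have m3 : (2:ℝ)^((3-(n:ℝ))/2) = 2^((3:ℝ)/2) * 2^(-(n:ℝ)/2) := by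
    rw [← Real.rpow_add h2]; ring_nf
  have hpos : (0:ℝ) < 2^(-(n:ℝ)/2) := Real.rpow_pos_of_pos h2 _
  rw [← hL1, ← hL2, hR]
  nlinarith [mul_le_mul_of_nonneg_right key32 (le_of_lt hpos), m1, m2, m3]

/-- The digit sequence `(a_n)` of the doubling map is α-mixing; more precisely, for all
`n, k ≥ 1` and all sets `A, B ⊆ ℕ`,
`|λ({a_k ∈ B} ∩ {a_{n+k} ∈ A}) - λ(a_k ∈ B)·λ(a_{n+k} ∈ A)| ≤ 2^{-n/2+2}`. -/
theorem stmt19 (n k : ℕ) (hn : 1 ≤ n) (hk : 1 ≤ k) (A B : Set ℕ) :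
    |(volume {x : ℝ | x ∈ Set.Ico (0 : ℝ) 1 ∧ digit k x ∈ B ∧ digit (n + k) x ∈ A}).toReal -
        (volume {x : ℝ | x ∈ Set.Ico (0 : ℝ) 1 ∧ digit k x ∈ B}).toReal *
          (volume {x : ℝ | x ∈ Set.Ico (0 : ℝ) 1 ∧ digit (n + k) x ∈ A}).toReal| ≤
      (2 : ℝ) ^ (-(n : ℝ) / 2 + 2) := by
  have hfr01 : ∀ y : ℝ, Int.fract y ∈ Ico (0:ℝ) 1 :=
    fun y => ⟨Int.fract_nonneg y, Int.fract_lt_one y⟩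
  have hcomp : ∀ x : ℝ, Int.fract ((2:ℝ)^(n+k-1) * x)
      = Int.fract ((2:ℝ)^n * Int.fract ((2:ℝ)^(k-1) * x)) := by
    intro x
    have he : n + k - 1 = n + (k - 1) := by omega
    have h := fract_int_mul_fract (2^n) ((2:ℝ)^(k-1) * x)
    push_cast at h
    rw [he, pow_add, mul_assoc, h]
  have hdig1 : ∀ x ∈ Ico (0:ℝ) 1, digit k x = ⌊1/(Int.fract ((2:ℝ)^(k-1) * x))⌋₊ := by
    intro x hx
    rw [digit, tau_iterate (k-1) hx]
  have hdig2 : ∀ x ∈ Ico (0:ℝ) 1, digit (n+k) x = ⌊1/(Int.fract ((2:ℝ)^(n+k-1) * x))⌋₊ := by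
    intro x hx
    rw [digit, tau_iterate (n+k-1) hx]
  -- set identifications
  have hEq1 : {x : ℝ | x ∈ Set.Ico (0 : ℝ) 1 ∧ digit k x ∈ B ∧ digit (n + k) x ∈ A}
      = Ico (0:ℝ) 1 ∩ {x : ℝ | Int.fract ((2:ℝ)^(k-1) * x)
          ∈ (dSet B ∩ {y : ℝ | Int.fract ((2:ℝ)^n * y) ∈ dSet A})} := by
    ext x
    simp only [mem_setOf_eq, mem_inter_iff]
    constructor
    · rintro ⟨hx, hB, hA⟩
      refine ⟨hx, ⟨hfr01 _, ?_⟩, ?_⟩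
      · rw [← hdig1 x hx]; exact hB
      · show Int.fract ((2:ℝ)^n * Int.fract ((2:ℝ)^(k-1) * x)) ∈ dSet A
        rw [← hcomp x]
        refine ⟨hfr01 _, ?_⟩
        rw [← hdig2 x hx]; exact hA
    · rintro ⟨hx, ⟨_, hB⟩, hA⟩
      have hA' : Int.fract ((2:ℝ)^n * Int.fract ((2:ℝ)^(k-1) * x)) ∈ dSet A := hA
      rw [← hcomp x] at hA'
      exact ⟨hx, by rw [hdig1 x hx]; exact hB, by rw [hdig2 x hx]; exact hA'.2⟩
  have hEq2 : {x : ℝ | x ∈ Set.Ico (0 : ℝ) 1 ∧ digit k x ∈ B}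
      = Ico (0:ℝ) 1 ∩ {x : ℝ | Int.fract ((2:ℝ)^(k-1) * x) ∈ dSet B} := by
    ext x
    simp only [mem_setOf_eq, mem_inter_iff]
    constructor
    · rintro ⟨hx, hB⟩
      exact ⟨hx, hfr01 _, by rw [← hdig1 x hx]; exact hB⟩
    · rintro ⟨hx, _, hB⟩
      exact ⟨hx, by rw [hdig1 x hx]; exact hB⟩
  have hEq3 : {x : ℝ | x ∈ Set.Ico (0 : ℝ) 1 ∧ digit (n + k) x ∈ A}
      = Ico (0:ℝ) 1 ∩ {x : ℝ | Int.fract ((2:ℝ)^(n+k-1) * x) ∈ dSet A} := by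
    ext x
    simp only [mem_setOf_eq, mem_inter_iff]
    constructor
    · rintro ⟨hx, hA⟩
      exact ⟨hx, hfr01 _, by rw [← hdig2 x hx]; exact hA⟩
    · rintro ⟨hx, _, hA⟩
      exact ⟨hx, by rw [hdig2 x hx]; exact hA⟩
  have hmeasA : MeasurableSet {y : ℝ | Int.fract ((2:ℝ)^n * y) ∈ dSet A} :=
    meas_fractset _ _ (dSet_meas A)
  have hv1 : volume {x : ℝ | x ∈ Set.Ico (0 : ℝ) 1 ∧ digit k x ∈ B ∧ digit (n + k) x ∈ A}
      = volume (dSet B ∩ {y : ℝ | Int.fract ((2:ℝ)^n * y) ∈ dSet A}) := by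
    rw [hEq1]
    exact full (k-1) _ ((dSet_meas B).inter hmeasA) (inter_subset_left.trans (dSet_sub B))
  have hv2 : volume {x : ℝ | x ∈ Set.Ico (0 : ℝ) 1 ∧ digit k x ∈ B} = volume (dSet B) := by
    rw [hEq2]
    exact full (k-1) _ (dSet_meas B) (dSet_sub B)
  have hv3 : volume {x : ℝ | x ∈ Set.Ico (0 : ℝ) 1 ∧ digit (n + k) x ∈ A} = volume (dSet A) := by
    rw [hEq3]
    exact full (n+k-1) _ (dSet_meas A) (dSet_sub A)
  rw [hv1, hv2, hv3]
  exact le_trans (core n hn A B) (eps_bound n)
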